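/- Fix an integer n ≥ 2, an EVEN positive integer a, a positive integer b, a nonnegative integer c and a real p ≥ 1. Let ξ ≥ 0 and let f : ℝⁿ∖{0} → [0,∞) be a symmetric measurable function which is positive on a set of positive Lebesgue measure and for which all integrals below are finite. Then: (i) if ξ < a, M_p((|x₂|^ξ x₁^a/(x₁^a − x₂^a)) f(x)) = (1/2) · M_p(((|x₁|^{a−ξ} − |x₂|^{a−ξ})/(|x₁|^a − |x₂|^a)) · |x₁ x₂|^ξ · f(x)) > 0; (ii) if ξ = a, M_p((|x₂|^ξ x₁^a/(x₁^a − x₂^a)) f(x)) = 0; (iii) if ξ > a, M_p((|x₂|^ξ x₁^a/(x₁^a − x₂^a)) f(x)) = (1/2) · M_p(((|x₂|^{ξ−a} − |x₁|^{ξ−a})/(|x₁|^a − |x₂|^a)) · |x₁ x₂|^a · f(x)) < 0. (All integrands are defined almost everywhere with respect to the density f_{a,b,c}, which vanishes where x₁^a = x₂^a.) -/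

import Mathlib

open MeasureTheory Real

/-- The density `∏_{i<j} |x_i^a - x_j^a|^b · ∏_i |x_i|^c` on `ℝⁿ`. -/
noncomputable def fabc (n a b c : ℕ) (x : Fin n → ℝ) : ℝ :=
  (∏ i : Fin n, ∏ j : Fin n, if i < j then |x i ^ a - x j ^ a| ^ b else 1) *
    ∏ i : Fin n, |x i| ^ c

/-- `M_p(g) = ∫ g(x) f_{a,b,c}(x) exp(-‖x‖_p^p) dx`. -/
noncomputable def Mp (n a b c : ℕ) (p : ℝ) (g : (Fin n → ℝ) → ℝ) : ℝ :=
  ∫ x : Fin n → ℝ, g x * fabc n a b c x * Real.exp (-∑ i, |x i| ^ p)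



/-- A nonzero linear functional's kernel is Lebesgue-null. -/
lemma s10.null_of_linear {n : ℕ} (φ : (Fin n → ℝ) →ₗ[ℝ] ℝ) (hφ : φ ≠ 0) :
    volume {x : Fin n → ℝ | φ x = 0} = 0 := by
  have h : {x : Fin n → ℝ | φ x = 0} = (LinearMap.ker φ : Set (Fin n → ℝ)) := rfl
  rw [h]
  exact Measure.addHaar_submodule volume _ (by simpa [LinearMap.ker_eq_top] using hφ)

lemma s10.null_eq {n : ℕ} {i j : Fin n} (hij : i ≠ j) :
    volume {x : Fin n → ℝ | x i = x j} = 0 := by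
  have h := s10.null_of_linear (n := n) ((LinearMap.proj i : (Fin n → ℝ) →ₗ[ℝ] ℝ) - (LinearMap.proj j : (Fin n → ℝ) →ₗ[ℝ] ℝ)) ?_
  · convert h using 2 with x
    simp [sub_eq_zero, eq_comm]
  · intro hc
    have := DFunLike.congr_fun hc (Pi.single i (1:ℝ))
    simp [Pi.single_apply, hij, Ne.symm hij] at this

lemma s10.null_neg {n : ℕ} {i j : Fin n} (hij : i ≠ j) :
    volume {x : Fin n → ℝ | x i = - x j} = 0 := by
  have h := s10.null_of_linear (n := n) ((LinearMap.proj i : (Fin n → ℝ) →ₗ[ℝ] ℝ) + (LinearMap.proj j : (Fin n → ℝ) →ₗ[ℝ] ℝ)) ?_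
  · convert h using 2 with x
    simp [eq_neg_iff_add_eq_zero, eq_comm]
  · intro hc
    have := DFunLike.congr_fun hc (Pi.single i (1:ℝ))
    simp [Pi.single_apply, hij, Ne.symm hij] at this

lemma s10.null_zero {n : ℕ} (i : Fin n) :
    volume {x : Fin n → ℝ | x i = 0} = 0 := by
  have h := s10.null_of_linear (n := n) ((LinearMap.proj i : (Fin n → ℝ) →ₗ[ℝ] ℝ)) ?_
  · exact h
  · intro hc
    have := DFunLike.congr_fun hc (Pi.single i (1:ℝ))
    simp [Pi.single_apply] at this

lemma s10.pow_right_inj {U V : ℝ} {a : ℕ} (hU : 0 ≤ U) (hV : 0 ≤ V) (ha : a ≠ 0)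
    (h : U ^ a = V ^ a) : U = V := by
  rcases lt_trichotomy U V with hc | hc | hc
  · exact absurd h (ne_of_lt (pow_lt_pow_left₀ hc hU ha))
  · exact hc
  · exact absurd h.symm (ne_of_lt (pow_lt_pow_left₀ hc hV ha))

/-- `x i ^ a = x j ^ a` is null for even positive `a` and `i ≠ j`. -/
lemma s10.null_pow {n a : ℕ} (ha : a ≠ 0) (hae : Even a) {i j : Fin n} (hij : i ≠ j) :
    volume {x : Fin n → ℝ | x i ^ a = x j ^ a} = 0 := by
  apply measure_mono_null (t := {x : Fin n → ℝ | x i = x j} ∪ {x | x i = - x j})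
  · intro x hx
    have h1 : |x i| ^ a = |x j| ^ a := by
      rw [hae.pow_abs, hae.pow_abs]; exact hx
    have h2 : |x i| = |x j| := s10.pow_right_inj (abs_nonneg _) (abs_nonneg _) ha h1
    rcases abs_eq_abs.mp h2 with h | h
    · exact Or.inl h
    · exact Or.inr h
  · exact measure_union_null (s10.null_eq hij) (s10.null_neg hij)

lemma s10.sq_prod {n : ℕ} (h : Fin n → Fin n → ℝ) (hsymm : ∀ i j, h i j = h j i)
    (σ : Equiv.Perm (Fin n)) :
    (∏ i : Fin n, ∏ j : Fin n, if i < j then h (σ i) (σ j) else 1) ^ 2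
      = ∏ i : Fin n, ∏ j : Fin n, if i ≠ j then h i j else 1 := by
  have step1 : (∏ i : Fin n, ∏ j : Fin n, if i < j then h (σ i) (σ j) else 1)
      = ∏ i : Fin n, ∏ j : Fin n, if j < i then h (σ j) (σ i) else 1 := by
    rw [Finset.prod_comm]
  calc (∏ i : Fin n, ∏ j : Fin n, if i < j then h (σ i) (σ j) else 1) ^ 2
      = (∏ i : Fin n, ∏ j : Fin n, if i < j then h (σ i) (σ j) else 1)
        * ∏ i : Fin n, ∏ j : Fin n, if j < i then h (σ j) (σ i) else 1 := by
        rw [sq, ← step1]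
    _ = ∏ i : Fin n, ∏ j : Fin n,
          (if i < j then h (σ i) (σ j) else 1) * (if j < i then h (σ j) (σ i) else 1) := by
        rw [← Finset.prod_mul_distrib]
        exact Finset.prod_congr rfl fun i _ => (Finset.prod_mul_distrib).symm
    _ = ∏ i : Fin n, ∏ j : Fin n, if σ i ≠ σ j then h (σ i) (σ j) else 1 := by
        refine Finset.prod_congr rfl fun i _ => Finset.prod_congr rfl fun j _ => ?_
        rcases lt_trichotomy i j with hc | hc | hc
        · simp [hc, lt_asymm hc, ne_of_lt hc, σ.injective.ne_iff, ne_of_gt, hc.ne]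
        · simp [hc]
        · simp [hc, lt_asymm hc, σ.injective.ne_iff, hc.ne', hsymm (σ j) (σ i)]
    _ = ∏ i : Fin n, ∏ j : Fin n, if i ≠ j then h i j else 1 := by
        rw [← Equiv.prod_comp σ (fun i => ∏ j : Fin n, if i ≠ j then h i j else 1)]
        exact Finset.prod_congr rfl fun i _ =>
          Equiv.prod_comp σ (fun j => if σ i ≠ j then h (σ i) j else 1)

lemma s10.prod_perm {n : ℕ} (h : Fin n → Fin n → ℝ) (hsymm : ∀ i j, h i j = h j i)
    (hnn : ∀ i j, 0 ≤ h i j) (σ : Equiv.Perm (Fin n)) :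
    (∏ i : Fin n, ∏ j : Fin n, if i < j then h (σ i) (σ j) else 1)
      = ∏ i : Fin n, ∏ j : Fin n, if i < j then h i j else 1 := by
  have h1 := s10.sq_prod h hsymm σ
  have h2 := s10.sq_prod h hsymm (Equiv.refl _)
  simp only [Equiv.refl_apply] at h2
  have hA : (0:ℝ) ≤ ∏ i : Fin n, ∏ j : Fin n, if i < j then h (σ i) (σ j) else 1 :=
    Finset.prod_nonneg fun i _ => Finset.prod_nonneg fun j _ => by
      split <;> [exact hnn _ _; exact zero_le_one]
  have hB : (0:ℝ) ≤ ∏ i : Fin n, ∏ j : Fin n, if i < j then h i j else 1 :=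
    Finset.prod_nonneg fun i _ => Finset.prod_nonneg fun j _ => by
      split <;> [exact hnn _ _; exact zero_le_one]
  nlinarith [h1, h2, hA, hB]
lemma s10.fabc_nonneg (n a b c : ℕ) (x : Fin n → ℝ) : 0 ≤ fabc n a b c x := by
  unfold fabc
  refine mul_nonneg (Finset.prod_nonneg fun i _ => Finset.prod_nonneg fun j _ => ?_)
    (Finset.prod_nonneg fun i _ => by positivity)
  split <;> positivity

lemma s10.fabc_perm {n : ℕ} (a b c : ℕ) (σ : Equiv.Perm (Fin n)) (x : Fin n → ℝ) :
    fabc n a b c (fun i => x (σ i)) = fabc n a b c x := by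
  unfold fabc
  congr 1
  · exact s10.prod_perm (fun i j => |x i ^ a - x j ^ a| ^ b)
      (fun i j => by rw [abs_sub_comm]) (fun i j => by positivity) σ
  · exact Equiv.prod_comp σ (fun i => |x i| ^ c)

lemma s10.fabc_eq_zero {n : ℕ} (a b c : ℕ) (hb : b ≠ 0) {i j : Fin n} (hij : i < j)
    {x : Fin n → ℝ} (hx : x i ^ a = x j ^ a) : fabc n a b c x = 0 := by
  unfold fabc
  apply mul_eq_zero_of_left
  apply Finset.prod_eq_zero (Finset.mem_univ i)
  apply Finset.prod_eq_zero (Finset.mem_univ j)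
  simp [hij, sub_eq_zero.mpr hx, zero_pow hb]

lemma s10.fabc_pos {n : ℕ} (a b c : ℕ) {x : Fin n → ℝ}
    (hx : ∀ i j : Fin n, i ≠ j → x i ^ a ≠ x j ^ a) (hx0 : ∀ i, x i ≠ 0) :
    0 < fabc n a b c x := by
  unfold fabc
  refine mul_pos (Finset.prod_pos fun i _ => Finset.prod_pos fun j _ => ?_)
    (Finset.prod_pos fun i _ => pow_pos (abs_pos.mpr (hx0 i)) c)
  split
  · rename_i hlt
    exact pow_pos (abs_pos.mpr (sub_ne_zero.mpr (hx i j (ne_of_lt hlt)))) b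
  · exact one_pos


lemma s10.key_rpow (a : ℕ) (ha : a ≠ 0) {ξ : ℝ} (hξ0 : 0 ≤ ξ) (hξa : ξ ≤ (a:ℝ)) {U : ℝ}
    (hU : 0 ≤ U) : U ^ ξ * U ^ ((a:ℝ) - ξ) = U ^ a := by
  rcases hU.eq_or_lt with h | h
  · subst h
    rcases hξ0.eq_or_lt with h0 | h0
    · rw [← h0]
      rcases hξa.eq_or_lt with h1 | h1
      · exfalso; have : (a:ℝ) = 0 := by linarith
        exact_mod_cast ha (by exact_mod_cast this)
      · rw [Real.rpow_zero, Real.zero_rpow (by linarith), one_mul, zero_pow ha]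
    · rw [Real.zero_rpow (ne_of_gt h0), zero_mul, zero_pow ha]
  · rw [← Real.rpow_natCast U a, ← Real.rpow_add h]; ring_nf

lemma s10.key_rpow' (a : ℕ) {ξ : ℝ} (ha : 0 < (a:ℝ)) (hξa : (a:ℝ) < ξ) {V : ℝ}
    (hV : 0 ≤ V) : V ^ ξ = V ^ (ξ - (a:ℝ)) * V ^ a := by
  rcases hV.eq_or_lt with h | h
  · subst h
    rw [Real.zero_rpow (by intro h; rw [h] at hξa; linarith : ξ ≠ 0),
      Real.zero_rpow (by intro h; nlinarith [sub_eq_zero.mp h] : ξ - (a:ℝ) ≠ 0),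
      zero_mul]
  · rw [← Real.rpow_natCast V a, ← Real.rpow_add h]; ring_nf

lemma s10.alg_lt (a : ℕ) (ha : a ≠ 0) (hae : Even a) {ξ : ℝ} (hξ0 : 0 ≤ ξ) (hξa : ξ < (a:ℝ))
    (u v : ℝ) (huv : u ^ a ≠ v ^ a) :
    |v| ^ ξ * u ^ a / (u ^ a - v ^ a) + |u| ^ ξ * v ^ a / (v ^ a - u ^ a)
      = (|u| ^ ((a:ℝ) - ξ) - |v| ^ ((a:ℝ) - ξ)) / (|u| ^ a - |v| ^ a) * |u * v| ^ ξ := by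
  have hu : u ^ a = |u| ^ a := (hae.pow_abs u).symm
  have hv : v ^ a = |v| ^ a := (hae.pow_abs v).symm
  have kU := s10.key_rpow a ha hξ0 hξa.le (abs_nonneg u)
  have kV := s10.key_rpow a ha hξ0 hξa.le (abs_nonneg v)
  have hmul : |u * v| ^ ξ = |u| ^ ξ * |v| ^ ξ := by
    rw [abs_mul, Real.mul_rpow (abs_nonneg _) (abs_nonneg _)]
  have hd : |u| ^ a - |v| ^ a ≠ 0 := sub_ne_zero.mpr (by rwa [hu, hv] at huv)
  have hd' : |v| ^ a - |u| ^ a ≠ 0 := fun h => hd (by linarith [sub_eq_zero.mp h])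
  rw [hu, hv, hmul]
  have hneg : |v| ^ a - |u| ^ a = -(|u| ^ a - |v| ^ a) := by ring
  rw [hneg, div_neg, div_mul_eq_mul_div, ← sub_eq_add_neg, div_sub_div_same]
  congr 1
  linear_combination |u| ^ ξ * kV - |v| ^ ξ * kU

lemma s10.alg_eq (a : ℕ) (hae : Even a) (u v : ℝ) (huv : u ^ a ≠ v ^ a) :
    |v| ^ ((a:ℕ):ℝ) * u ^ a / (u ^ a - v ^ a) + |u| ^ ((a:ℕ):ℝ) * v ^ a / (v ^ a - u ^ a)
      = 0 := by
  have hu : u ^ a = |u| ^ a := (hae.pow_abs u).symm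
  have hv : v ^ a = |v| ^ a := (hae.pow_abs v).symm
  have hd : u ^ a - v ^ a ≠ 0 := sub_ne_zero.mpr huv
  have hd' : v ^ a - u ^ a ≠ 0 := fun h => hd (by linarith [sub_eq_zero.mp h])
  rw [Real.rpow_natCast, Real.rpow_natCast, ← hu, ← hv]
  field_simp
  ring

lemma s10.alg_gt (a : ℕ) (ha : a ≠ 0) (hae : Even a) {ξ : ℝ} (hξa : (a:ℝ) < ξ)
    (u v : ℝ) (huv : u ^ a ≠ v ^ a) :
    |v| ^ ξ * u ^ a / (u ^ a - v ^ a) + |u| ^ ξ * v ^ a / (v ^ a - u ^ a)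
      = (|v| ^ (ξ - (a:ℝ)) - |u| ^ (ξ - (a:ℝ))) / (|u| ^ a - |v| ^ a) * |u * v| ^ a := by
  have hapos : 0 < (a:ℝ) := by exact_mod_cast Nat.pos_of_ne_zero ha
  have hu : u ^ a = |u| ^ a := (hae.pow_abs u).symm
  have hv : v ^ a = |v| ^ a := (hae.pow_abs v).symm
  have kU := s10.key_rpow' a hapos hξa (abs_nonneg u)
  have kV := s10.key_rpow' a hapos hξa (abs_nonneg v)
  have hmul : |u * v| ^ a = |u| ^ a * |v| ^ a := by rw [abs_mul, mul_pow]
  have hd : |u| ^ a - |v| ^ a ≠ 0 := sub_ne_zero.mpr (by rwa [hu, hv] at huv)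
  have hd' : |v| ^ a - |u| ^ a ≠ 0 := fun h => hd (by linarith [sub_eq_zero.mp h])
  rw [hu, hv, hmul]
  have hneg : |v| ^ a - |u| ^ a = -(|u| ^ a - |v| ^ a) := by ring
  rw [hneg, div_neg, div_mul_eq_mul_div, ← sub_eq_add_neg, div_sub_div_same]
  congr 1
  linear_combination |u| ^ a * kV - |v| ^ a * kU


lemma s10.sign_lt (a : ℕ) (ha : a ≠ 0) {ξ : ℝ} (hξa : ξ < (a:ℝ)) (u v : ℝ) :
    0 ≤ (|u| ^ ((a:ℝ) - ξ) - |v| ^ ((a:ℝ) - ξ)) / (|u| ^ a - |v| ^ a) * |u * v| ^ ξ := by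
  have hs : 0 < (a:ℝ) - ξ := by linarith
  rcases lt_trichotomy |u| |v| with hc | hc | hc
  · refine mul_nonneg (div_nonneg_of_nonpos ?_ ?_) (Real.rpow_nonneg (abs_nonneg _) _)
    · simp only [sub_nonpos]
      exact Real.rpow_le_rpow (abs_nonneg u) hc.le hs.le
    · simp only [sub_nonpos]
      exact pow_le_pow_left₀ (abs_nonneg u) hc.le a
  · rw [hc, sub_self, sub_self, zero_div, zero_mul]
  · refine mul_nonneg (div_nonneg ?_ ?_) (Real.rpow_nonneg (abs_nonneg _) _)
    · simp only [sub_nonneg]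
      exact Real.rpow_le_rpow (abs_nonneg v) hc.le hs.le
    · simp only [sub_nonneg]
      exact pow_le_pow_left₀ (abs_nonneg v) hc.le a
lemma s10.sign_lt_pos (a : ℕ) (ha : a ≠ 0) {ξ : ℝ} (hξa : ξ < (a:ℝ)) (u v : ℝ)
    (hu : u ≠ 0) (hv : v ≠ 0) (huv : |u| ≠ |v|) :
    0 < (|u| ^ ((a:ℝ) - ξ) - |v| ^ ((a:ℝ) - ξ)) / (|u| ^ a - |v| ^ a) * |u * v| ^ ξ := by
  have hs : 0 < (a:ℝ) - ξ := by linarith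
  have habs : 0 < |u * v| := abs_pos.mpr (mul_ne_zero hu hv)
  rcases lt_trichotomy |u| |v| with hc | hc | hc
  · refine mul_pos (div_pos_of_neg_of_neg ?_ ?_) (Real.rpow_pos_of_pos habs _)
    · simpa only [sub_neg] using Real.rpow_lt_rpow (abs_nonneg u) hc hs
    · simpa only [sub_neg] using pow_lt_pow_left₀ hc (abs_nonneg u) ha
  · exact absurd hc huv
  · refine mul_pos (div_pos ?_ ?_) (Real.rpow_pos_of_pos habs _)
    · simpa only [sub_pos] using Real.rpow_lt_rpow (abs_nonneg v) hc hs
    · simpa only [sub_pos] using pow_lt_pow_left₀ hc (abs_nonneg v) ha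

lemma s10.sign_gt (a : ℕ) (ha : a ≠ 0) {ξ : ℝ} (hξa : (a:ℝ) < ξ) (u v : ℝ) :
    (|v| ^ (ξ - (a:ℝ)) - |u| ^ (ξ - (a:ℝ))) / (|u| ^ a - |v| ^ a) * |u * v| ^ a ≤ 0 := by
  have hs : 0 < ξ - (a:ℝ) := by linarith
  rcases lt_trichotomy |u| |v| with hc | hc | hc
  · refine mul_nonpos_iff.mpr (Or.inr ⟨div_nonpos_iff.mpr (Or.inl ⟨?_, ?_⟩), by positivity⟩)
    · simp only [sub_nonneg]
      exact Real.rpow_le_rpow (abs_nonneg u) hc.le hs.le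
    · simp only [sub_nonpos]
      exact pow_le_pow_left₀ (abs_nonneg u) hc.le a
  · rw [hc, sub_self, sub_self, zero_div, zero_mul]
  · refine mul_nonpos_iff.mpr (Or.inr ⟨div_nonpos_iff.mpr (Or.inr ⟨?_, ?_⟩), by positivity⟩)
    · simp only [sub_nonpos]
      exact Real.rpow_le_rpow (abs_nonneg v) hc.le hs.le
    · simp only [sub_nonneg]
      exact pow_le_pow_left₀ (abs_nonneg v) hc.le a
lemma s10.sign_gt_neg (a : ℕ) (ha : a ≠ 0) {ξ : ℝ} (hξa : (a:ℝ) < ξ) (u v : ℝ)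
    (hu : u ≠ 0) (hv : v ≠ 0) (huv : |u| ≠ |v|) :
    (|v| ^ (ξ - (a:ℝ)) - |u| ^ (ξ - (a:ℝ))) / (|u| ^ a - |v| ^ a) * |u * v| ^ a < 0 := by
  have hs : 0 < ξ - (a:ℝ) := by linarith
  have habs : 0 < |u * v| := abs_pos.mpr (mul_ne_zero hu hv)
  rcases lt_trichotomy |u| |v| with hc | hc | hc
  · refine mul_neg_of_neg_of_pos (div_neg_of_pos_of_neg ?_ ?_) (pow_pos habs _)
    · simpa only [sub_pos] using Real.rpow_lt_rpow (abs_nonneg u) hc hs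
    · simpa only [sub_neg] using pow_lt_pow_left₀ hc (abs_nonneg u) ha
  · exact absurd hc huv
  · refine mul_neg_of_neg_of_pos (div_neg_of_neg_of_pos ?_ ?_) (pow_pos habs _)
    · simpa only [sub_neg] using Real.rpow_lt_rpow (abs_nonneg v) hc hs
    · simpa only [sub_pos] using pow_lt_pow_left₀ hc (abs_nonneg v) ha


lemma s10.piCongr_apply {n : ℕ} (σ : Equiv.Perm (Fin n)) (x : Fin n → ℝ) :
    MeasurableEquiv.piCongrLeft (fun _ : Fin n => ℝ) σ.symm x = fun j => x (σ j) := by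
  funext j; simp [MeasurableEquiv.piCongrLeft, Equiv.piCongrLeft_apply_eq_cast]

lemma s10.integral_perm {n : ℕ} (σ : Equiv.Perm (Fin n)) (G : (Fin n → ℝ) → ℝ) :
    ∫ x : Fin n → ℝ, G (fun j => x (σ j)) = ∫ x : Fin n → ℝ, G x := by
  have hmp := volume_measurePreserving_piCongrLeft (fun _ : Fin n => ℝ) σ.symm
  have h := hmp.integral_comp (MeasurableEquiv.measurableEmbedding _) G
  rw [← h]
  congr 1
  funext x
  rw [s10.piCongr_apply]

lemma s10.integrable_perm {n : ℕ} (σ : Equiv.Perm (Fin n)) {G : (Fin n → ℝ) → ℝ}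
    (hG : Integrable G) : Integrable (fun x : Fin n → ℝ => G (fun j => x (σ j))) := by
  have hmp := volume_measurePreserving_piCongrLeft (fun _ : Fin n => ℝ) σ.symm
  have h := (hmp.integrable_comp_emb (MeasurableEquiv.measurableEmbedding _)).mpr hG
  have he : (G ∘ MeasurableEquiv.piCongrLeft (fun _ : Fin n => ℝ) σ.symm)
      = fun x : Fin n → ℝ => G (fun j => x (σ j)) := by
    funext x
    simp only [Function.comp_apply, s10.piCongr_apply]
  rwa [he] at h
/-- the bad set is null -/
lemma s10.null_bad {n a : ℕ} (ha : a ≠ 0) (hae : Even a) :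
    volume {x : Fin n → ℝ | (∃ i j : Fin n, i ≠ j ∧ x i ^ a = x j ^ a) ∨ ∃ i, x i = 0} = 0 := by
  apply measure_mono_null
    (t := (⋃ i : Fin n, ⋃ j : Fin n, {x : Fin n → ℝ | i ≠ j ∧ x i ^ a = x j ^ a})
      ∪ ⋃ i : Fin n, {x : Fin n → ℝ | x i = 0})
  · intro x hx
    rcases hx with ⟨i, j, hij, hx⟩ | ⟨i, hx⟩
    · exact Or.inl (Set.mem_iUnion.mpr ⟨i, Set.mem_iUnion.mpr ⟨j, ⟨hij, hx⟩⟩⟩)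
    · exact Or.inr (Set.mem_iUnion.mpr ⟨i, hx⟩)
  · refine measure_union_null (measure_iUnion_null fun i => measure_iUnion_null fun j => ?_)
      (measure_iUnion_null fun i => s10.null_zero i)
    by_cases hij : i = j
    · have : {x : Fin n → ℝ | i ≠ j ∧ x i ^ a = x j ^ a} = ∅ := by
        ext x; simp [hij]
      rw [this]; simp
    · exact measure_mono_null (fun x hx => hx.2) (s10.null_pow ha hae hij)

/-- the composed main integrand under coordinate swap -/
lemma s10.swap_fun_eq {n : ℕ} (a b c : ℕ) (p ξ : ℝ) (f : (Fin n → ℝ) → ℝ)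
    (hsym : ∀ (σ : Equiv.Perm (Fin n)) (x : Fin n → ℝ), f (fun i => x (σ i)) = f x)
    {i0 i1 : Fin n} (h01 : i0 ≠ i1) :
    (fun x : Fin n → ℝ => (fun y : Fin n → ℝ =>
        (|y i1| ^ ξ * y i0 ^ a / (y i0 ^ a - y i1 ^ a) * f y) * fabc n a b c y *
          Real.exp (-∑ i, |y i| ^ p)) (fun j => x (Equiv.swap i0 i1 j)))
      = fun x : Fin n → ℝ =>
        (|x i0| ^ ξ * x i1 ^ a / (x i1 ^ a - x i0 ^ a) * f x) * fabc n a b c x *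
          Real.exp (-∑ i, |x i| ^ p) := by
  funext x
  simp only []
  rw [Equiv.swap_apply_left, Equiv.swap_apply_right, hsym (Equiv.swap i0 i1) x,
    s10.fabc_perm a b c (Equiv.swap i0 i1) x,
    Equiv.sum_comp (Equiv.swap i0 i1) (fun i => |x i| ^ p)]
lemma s10.master_lt (n a b c : ℕ) (ha : 1 ≤ a) (haeven : Even a) (hb : 1 ≤ b)
    (p ξ : ℝ) (hξ0 : 0 ≤ ξ) (hξa : ξ < (a:ℝ))
    (f : (Fin n → ℝ) → ℝ) (hnonneg : ∀ x, 0 ≤ f x)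
    (hsym : ∀ (σ : Equiv.Perm (Fin n)) (x : Fin n → ℝ), f (fun i => x (σ i)) = f x)
    (hpos : 0 < volume {x : Fin n → ℝ | 0 < f x})
    (i0 i1 : Fin n) (h01 : i0 < i1)
    (hint_main : Integrable (fun x : Fin n → ℝ =>
      (|x i1| ^ ξ * x i0 ^ a / (x i0 ^ a - x i1 ^ a) * f x) * fabc n a b c x *
        Real.exp (-∑ i, |x i| ^ p)))
    (hint_lt : Integrable (fun x : Fin n → ℝ =>
      ((|x i0| ^ ((a : ℝ) - ξ) - |x i1| ^ ((a : ℝ) - ξ)) / (|x i0| ^ a - |x i1| ^ a) *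
          |x i0 * x i1| ^ ξ * f x) * fabc n a b c x * Real.exp (-∑ i, |x i| ^ p))) :
    Mp n a b c p (fun x => |x i1| ^ ξ * x i0 ^ a / (x i0 ^ a - x i1 ^ a) * f x) =
      (1 / 2) * Mp n a b c p (fun x =>
        (|x i0| ^ ((a : ℝ) - ξ) - |x i1| ^ ((a : ℝ) - ξ)) / (|x i0| ^ a - |x i1| ^ a) *
          |x i0 * x i1| ^ ξ * f x) ∧
    0 < Mp n a b c p (fun x => |x i1| ^ ξ * x i0 ^ a / (x i0 ^ a - x i1 ^ a) * f x) := by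
  have hane : a ≠ 0 := by omega
  have h01' : i0 ≠ i1 := ne_of_lt h01
  set σ : Equiv.Perm (Fin n) := Equiv.swap i0 i1 with hσ
  set G : (Fin n → ℝ) → ℝ := fun y =>
    (|y i1| ^ ξ * y i0 ^ a / (y i0 ^ a - y i1 ^ a) * f y) * fabc n a b c y *
      Real.exp (-∑ i, |y i| ^ p) with hG
  set S : (Fin n → ℝ) → ℝ := fun x =>
    (|x i0| ^ ξ * x i1 ^ a / (x i1 ^ a - x i0 ^ a) * f x) * fabc n a b c x *
      Real.exp (-∑ i, |x i| ^ p) with hS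
  set T : (Fin n → ℝ) → ℝ := fun x =>
    ((|x i0| ^ ((a : ℝ) - ξ) - |x i1| ^ ((a : ℝ) - ξ)) / (|x i0| ^ a - |x i1| ^ a) *
        |x i0 * x i1| ^ ξ * f x) * fabc n a b c x * Real.exp (-∑ i, |x i| ^ p) with hT
  have hfun : (fun x : Fin n → ℝ => G (fun j => x (σ j))) = S :=
    s10.swap_fun_eq a b c p ξ f hsym h01'
  have hSint : Integrable S := hfun ▸ s10.integrable_perm σ hint_main
  have hGS : ∫ x, G x = ∫ x, S x := by
    rw [← s10.integral_perm σ G, hfun]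
  have hpt : ∀ x, G x + S x = T x := by
    intro x
    by_cases hfz : fabc n a b c x = 0
    · simp [hG, hS, hT, hfz]
    · have hxne : x i0 ^ a ≠ x i1 ^ a := fun h => hfz (s10.fabc_eq_zero a b c (by omega) h01 h)
      have halg := s10.alg_lt a hane haeven hξ0 hξa (x i0) (x i1) hxne
      simp only [hG, hS, hT]
      linear_combination (f x * fabc n a b c x * Real.exp (-∑ i, |x i| ^ p)) * halg
    
  have hsum : (∫ x, G x) + (∫ x, S x) = ∫ x, T x := by
    rw [← integral_add hint_main hSint]
    exact integral_congr_ae (Filter.Eventually.of_forall hpt)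
  have hMT : Mp n a b c p (fun x =>
      (|x i0| ^ ((a : ℝ) - ξ) - |x i1| ^ ((a : ℝ) - ξ)) / (|x i0| ^ a - |x i1| ^ a) *
        |x i0 * x i1| ^ ξ * f x) = ∫ x, T x := rfl
  have hMG : Mp n a b c p (fun x => |x i1| ^ ξ * x i0 ^ a / (x i0 ^ a - x i1 ^ a) * f x)
      = ∫ x, G x := rfl
  -- positivity of ∫ T
  have hTnn : ∀ x, 0 ≤ T x := by
    intro x
    exact mul_nonneg (mul_nonneg (mul_nonneg (s10.sign_lt a hane hξa (x i0) (x i1))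
      (hnonneg x)) (s10.fabc_nonneg n a b c x)) (Real.exp_nonneg _)
  have hTpos : 0 < ∫ x, T x := by
    rw [integral_pos_iff_support_of_nonneg hTnn hint_lt]
    set bad : Set (Fin n → ℝ) :=
      {x | (∃ i j : Fin n, i ≠ j ∧ x i ^ a = x j ^ a) ∨ ∃ i, x i = 0} with hbad
    have hsub : {x : Fin n → ℝ | 0 < f x} \ bad ⊆ Function.support T := by
      intro x ⟨hfx, hxbad⟩
      simp only [hbad, Set.mem_setOf_eq, not_or, not_exists] at hxbad
      obtain ⟨hx1, hx2⟩ := hxbad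
      have hxd : ∀ i j : Fin n, i ≠ j → x i ^ a ≠ x j ^ a := by
        intro i j hij h
        exact hx1 i j ⟨hij, h⟩
      have hx0 : ∀ i, x i ≠ 0 := hx2
      have habs : |x i0| ≠ |x i1| := by
        intro h
        exact hxd i0 i1 h01'
          (by rw [← haeven.pow_abs (x i0), ← haeven.pow_abs (x i1), h])
      have : 0 < T x := by
        refine mul_pos (mul_pos (mul_pos
          (s10.sign_lt_pos a hane hξa (x i0) (x i1) (hx0 i0) (hx0 i1) habs)
          hfx) (s10.fabc_pos a b c hxd hx0)) (Real.exp_pos _)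
      exact ne_of_gt this
    have h1 : volume ({x : Fin n → ℝ | 0 < f x} \ bad)
        = volume {x : Fin n → ℝ | 0 < f x} :=
      measure_diff_null (s10.null_bad hane haeven)
    refine lt_of_lt_of_le ?_ (measure_mono hsub)
    rw [h1]
    exact hpos
  constructor
  · rw [hMG, hMT]; linarith [hGS, hsum]
  · rw [hMG]; linarith [hGS, hsum, hTpos]


lemma s10.master_eq (n a b c : ℕ) (ha : 1 ≤ a) (haeven : Even a) (hb : 1 ≤ b)
    (p ξ : ℝ) (hξeq : ξ = (a:ℝ))
    (f : (Fin n → ℝ) → ℝ)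
    (hsym : ∀ (σ : Equiv.Perm (Fin n)) (x : Fin n → ℝ), f (fun i => x (σ i)) = f x)
    (i0 i1 : Fin n) (h01 : i0 < i1)
    (hint_main : Integrable (fun x : Fin n → ℝ =>
      (|x i1| ^ ξ * x i0 ^ a / (x i0 ^ a - x i1 ^ a) * f x) * fabc n a b c x *
        Real.exp (-∑ i, |x i| ^ p))) :
    Mp n a b c p (fun x => |x i1| ^ ξ * x i0 ^ a / (x i0 ^ a - x i1 ^ a) * f x) = 0 := by
  subst hξeq
  have h01' : i0 ≠ i1 := ne_of_lt h01
  set σ : Equiv.Perm (Fin n) := Equiv.swap i0 i1 with hσ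
  set G : (Fin n → ℝ) → ℝ := fun y =>
    (|y i1| ^ ((a:ℕ):ℝ) * y i0 ^ a / (y i0 ^ a - y i1 ^ a) * f y) * fabc n a b c y *
      Real.exp (-∑ i, |y i| ^ p) with hG
  set S : (Fin n → ℝ) → ℝ := fun x =>
    (|x i0| ^ ((a:ℕ):ℝ) * x i1 ^ a / (x i1 ^ a - x i0 ^ a) * f x) * fabc n a b c x *
      Real.exp (-∑ i, |x i| ^ p) with hS
  have hfun : (fun x : Fin n → ℝ => G (fun j => x (σ j))) = S :=
    s10.swap_fun_eq a b c p ((a:ℕ):ℝ) f hsym h01'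
  have hSint : Integrable S := hfun ▸ s10.integrable_perm σ hint_main
  have hGS : ∫ x, G x = ∫ x, S x := by
    rw [← s10.integral_perm σ G, hfun]
  have hpt : ∀ x, G x + S x = 0 := by
    intro x
    by_cases hfz : fabc n a b c x = 0
    · simp [hG, hS, hfz]
    · have hxne : x i0 ^ a ≠ x i1 ^ a := fun h => hfz (s10.fabc_eq_zero a b c (by omega) h01 h)
      have halg := s10.alg_eq a haeven (x i0) (x i1) hxne
      simp only [hG, hS]
      linear_combination (f x * fabc n a b c x * Real.exp (-∑ i, |x i| ^ p)) * halg
  have hsum : (∫ x, G x) + (∫ x, S x) = 0 := by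
    rw [← integral_add hint_main hSint]
    rw [show (fun x => G x + S x) = (fun _ => (0:ℝ)) from funext hpt]
    simp
  have hMG : Mp n a b c p (fun x => |x i1| ^ ((a:ℕ):ℝ) * x i0 ^ a / (x i0 ^ a - x i1 ^ a) * f x)
      = ∫ x, G x := rfl
  rw [hMG]; linarith [hGS, hsum]

lemma s10.master_gt (n a b c : ℕ) (ha : 1 ≤ a) (haeven : Even a) (hb : 1 ≤ b)
    (p ξ : ℝ) (hξa : (a:ℝ) < ξ)
    (f : (Fin n → ℝ) → ℝ) (hnonneg : ∀ x, 0 ≤ f x)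
    (hsym : ∀ (σ : Equiv.Perm (Fin n)) (x : Fin n → ℝ), f (fun i => x (σ i)) = f x)
    (hpos : 0 < volume {x : Fin n → ℝ | 0 < f x})
    (i0 i1 : Fin n) (h01 : i0 < i1)
    (hint_main : Integrable (fun x : Fin n → ℝ =>
      (|x i1| ^ ξ * x i0 ^ a / (x i0 ^ a - x i1 ^ a) * f x) * fabc n a b c x *
        Real.exp (-∑ i, |x i| ^ p)))
    (hint_gt : Integrable (fun x : Fin n → ℝ =>
      ((|x i1| ^ (ξ - (a:ℝ)) - |x i0| ^ (ξ - (a:ℝ))) / (|x i0| ^ a - |x i1| ^ a) *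
          |x i0 * x i1| ^ a * f x) * fabc n a b c x * Real.exp (-∑ i, |x i| ^ p))) :
    Mp n a b c p (fun x => |x i1| ^ ξ * x i0 ^ a / (x i0 ^ a - x i1 ^ a) * f x) =
      (1 / 2) * Mp n a b c p (fun x =>
        (|x i1| ^ (ξ - (a:ℝ)) - |x i0| ^ (ξ - (a:ℝ))) / (|x i0| ^ a - |x i1| ^ a) *
          |x i0 * x i1| ^ a * f x) ∧
    Mp n a b c p (fun x => |x i1| ^ ξ * x i0 ^ a / (x i0 ^ a - x i1 ^ a) * f x) < 0 := by
  have hane : a ≠ 0 := by omega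
  have h01' : i0 ≠ i1 := ne_of_lt h01
  set σ : Equiv.Perm (Fin n) := Equiv.swap i0 i1 with hσ
  set G : (Fin n → ℝ) → ℝ := fun y =>
    (|y i1| ^ ξ * y i0 ^ a / (y i0 ^ a - y i1 ^ a) * f y) * fabc n a b c y *
      Real.exp (-∑ i, |y i| ^ p) with hG
  set S : (Fin n → ℝ) → ℝ := fun x =>
    (|x i0| ^ ξ * x i1 ^ a / (x i1 ^ a - x i0 ^ a) * f x) * fabc n a b c x *
      Real.exp (-∑ i, |x i| ^ p) with hS
  set T : (Fin n → ℝ) → ℝ := fun x =>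
    ((|x i1| ^ (ξ - (a:ℝ)) - |x i0| ^ (ξ - (a:ℝ))) / (|x i0| ^ a - |x i1| ^ a) *
        |x i0 * x i1| ^ a * f x) * fabc n a b c x * Real.exp (-∑ i, |x i| ^ p) with hT
  have hfun : (fun x : Fin n → ℝ => G (fun j => x (σ j))) = S :=
    s10.swap_fun_eq a b c p ξ f hsym h01'
  have hSint : Integrable S := hfun ▸ s10.integrable_perm σ hint_main
  have hGS : ∫ x, G x = ∫ x, S x := by
    rw [← s10.integral_perm σ G, hfun]
  have hpt : ∀ x, G x + S x = T x := by
    intro x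
    by_cases hfz : fabc n a b c x = 0
    · simp [hG, hS, hT, hfz]
    · have hxne : x i0 ^ a ≠ x i1 ^ a := fun h => hfz (s10.fabc_eq_zero a b c (by omega) h01 h)
      have halg := s10.alg_gt a hane haeven hξa (x i0) (x i1) hxne
      simp only [hG, hS, hT]
      linear_combination (f x * fabc n a b c x * Real.exp (-∑ i, |x i| ^ p)) * halg
  have hsum : (∫ x, G x) + (∫ x, S x) = ∫ x, T x := by
    rw [← integral_add hint_main hSint]
    exact integral_congr_ae (Filter.Eventually.of_forall hpt)
  have hMT : Mp n a b c p (fun x =>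
      (|x i1| ^ (ξ - (a:ℝ)) - |x i0| ^ (ξ - (a:ℝ))) / (|x i0| ^ a - |x i1| ^ a) *
        |x i0 * x i1| ^ a * f x) = ∫ x, T x := rfl
  have hMG : Mp n a b c p (fun x => |x i1| ^ ξ * x i0 ^ a / (x i0 ^ a - x i1 ^ a) * f x)
      = ∫ x, G x := rfl
  have hTnn : ∀ x, 0 ≤ -T x := by
    intro x
    have h1 : T x ≤ 0 :=
      mul_nonpos_iff.mpr (Or.inr ⟨mul_nonpos_iff.mpr (Or.inr
        ⟨mul_nonpos_iff.mpr (Or.inr ⟨s10.sign_gt a hane hξa (x i0) (x i1), hnonneg x⟩),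
          s10.fabc_nonneg n a b c x⟩), Real.exp_nonneg _⟩)
    linarith
  have hTneg : 0 < ∫ x, -T x := by
    rw [integral_pos_iff_support_of_nonneg hTnn hint_gt.neg]
    set bad : Set (Fin n → ℝ) :=
      {x | (∃ i j : Fin n, i ≠ j ∧ x i ^ a = x j ^ a) ∨ ∃ i, x i = 0} with hbad
    have hsub : {x : Fin n → ℝ | 0 < f x} \ bad ⊆ Function.support (fun x => -T x) := by
      intro x ⟨hfx, hxbad⟩
      simp only [hbad, Set.mem_setOf_eq, not_or, not_exists] at hxbad
      obtain ⟨hx1, hx2⟩ := hxbad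
      have hxd : ∀ i j : Fin n, i ≠ j → x i ^ a ≠ x j ^ a := by
        intro i j hij h
        exact hx1 i j ⟨hij, h⟩
      have hx0 : ∀ i, x i ≠ 0 := hx2
      have habs : |x i0| ≠ |x i1| := by
        intro h
        exact hxd i0 i1 h01'
          (by rw [← haeven.pow_abs (x i0), ← haeven.pow_abs (x i1), h])
      have hT0 : T x < 0 :=
        mul_neg_of_neg_of_pos (mul_neg_of_neg_of_pos (mul_neg_of_neg_of_pos
          (s10.sign_gt_neg a hane hξa (x i0) (x i1) (hx0 i0) (hx0 i1) habs)
          hfx) (s10.fabc_pos a b c hxd hx0)) (Real.exp_pos _)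
      simp only [Function.mem_support]
      intro hc
      rw [neg_eq_zero] at hc
      exact absurd hc (ne_of_lt hT0)
    have h1 : volume ({x : Fin n → ℝ | 0 < f x} \ bad)
        = volume {x : Fin n → ℝ | 0 < f x} :=
      measure_diff_null (s10.null_bad hane haeven)
    refine lt_of_lt_of_le ?_ (measure_mono hsub)
    rw [h1]
    exact hpos
  rw [integral_neg] at hTneg
  constructor
  · rw [hMG, hMT]; linarith [hGS, hsum]
  · rw [hMG]; linarith [hGS, hsum, hTneg]

/-- sign of the cross term for even `a`. -/
theorem statement10 (n a b c : ℕ) (hn : 2 ≤ n) (ha : 1 ≤ a) (haeven : Even a) (hb : 1 ≤ b)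
    (p : ℝ) (hp : 1 ≤ p) (ξ : ℝ) (hξ : 0 ≤ ξ)
    (f : (Fin n → ℝ) → ℝ) (hmeas : Measurable f) (hnonneg : ∀ x, 0 ≤ f x)
    (hsym : ∀ (σ : Equiv.Perm (Fin n)) (x : Fin n → ℝ), f (fun i => x (σ i)) = f x)
    (hpos : 0 < volume {x : Fin n → ℝ | 0 < f x})
    (hint_main : Integrable (fun x : Fin n → ℝ =>
      (|x ⟨1, by omega⟩| ^ ξ * x ⟨0, by omega⟩ ^ a /
          (x ⟨0, by omega⟩ ^ a - x ⟨1, by omega⟩ ^ a) * f x) *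
        fabc n a b c x * Real.exp (-∑ i, |x i| ^ p)))
    (hint_lt : Integrable (fun x : Fin n → ℝ =>
      ((|x ⟨0, by omega⟩| ^ ((a : ℝ) - ξ) - |x ⟨1, by omega⟩| ^ ((a : ℝ) - ξ)) /
          (|x ⟨0, by omega⟩| ^ a - |x ⟨1, by omega⟩| ^ a) *
          |x ⟨0, by omega⟩ * x ⟨1, by omega⟩| ^ ξ * f x) *
        fabc n a b c x * Real.exp (-∑ i, |x i| ^ p)))
    (hint_gt : Integrable (fun x : Fin n → ℝ =>
      ((|x ⟨1, by omega⟩| ^ (ξ - (a : ℝ)) - |x ⟨0, by omega⟩| ^ (ξ - (a : ℝ))) /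
          (|x ⟨0, by omega⟩| ^ a - |x ⟨1, by omega⟩| ^ a) *
          |x ⟨0, by omega⟩ * x ⟨1, by omega⟩| ^ a * f x) *
        fabc n a b c x * Real.exp (-∑ i, |x i| ^ p))) :
    (ξ < (a : ℝ) →
      Mp n a b c p (fun x =>
          |x ⟨1, by omega⟩| ^ ξ * x ⟨0, by omega⟩ ^ a /
            (x ⟨0, by omega⟩ ^ a - x ⟨1, by omega⟩ ^ a) * f x) =
        (1 / 2) * Mp n a b c p (fun x =>
          (|x ⟨0, by omega⟩| ^ ((a : ℝ) - ξ) - |x ⟨1, by omega⟩| ^ ((a : ℝ) - ξ)) /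
            (|x ⟨0, by omega⟩| ^ a - |x ⟨1, by omega⟩| ^ a) *
            |x ⟨0, by omega⟩ * x ⟨1, by omega⟩| ^ ξ * f x) ∧
      0 < Mp n a b c p (fun x =>
          |x ⟨1, by omega⟩| ^ ξ * x ⟨0, by omega⟩ ^ a /
            (x ⟨0, by omega⟩ ^ a - x ⟨1, by omega⟩ ^ a) * f x)) ∧
    (ξ = (a : ℝ) →
      Mp n a b c p (fun x =>
          |x ⟨1, by omega⟩| ^ ξ * x ⟨0, by omega⟩ ^ a /
            (x ⟨0, by omega⟩ ^ a - x ⟨1, by omega⟩ ^ a) * f x) = 0) ∧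
    ((a : ℝ) < ξ →
      Mp n a b c p (fun x =>
          |x ⟨1, by omega⟩| ^ ξ * x ⟨0, by omega⟩ ^ a /
            (x ⟨0, by omega⟩ ^ a - x ⟨1, by omega⟩ ^ a) * f x) =
        (1 / 2) * Mp n a b c p (fun x =>
          (|x ⟨1, by omega⟩| ^ (ξ - (a : ℝ)) - |x ⟨0, by omega⟩| ^ (ξ - (a : ℝ))) /
            (|x ⟨0, by omega⟩| ^ a - |x ⟨1, by omega⟩| ^ a) *
            |x ⟨0, by omega⟩ * x ⟨1, by omega⟩| ^ a * f x) ∧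
      Mp n a b c p (fun x =>
          |x ⟨1, by omega⟩| ^ ξ * x ⟨0, by omega⟩ ^ a /
            (x ⟨0, by omega⟩ ^ a - x ⟨1, by omega⟩ ^ a) * f x) < 0) := by
  have h01 : (⟨0, by omega⟩ : Fin n) < (⟨1, by omega⟩ : Fin n) := by
    rw [Fin.mk_lt_mk]
    omega
  refine ⟨fun hlt => s10.master_lt n a b c ha haeven hb p ξ hξ hlt f hnonneg hsym hpos
      _ _ h01 hint_main hint_lt,
    fun heq => s10.master_eq n a b c ha haeven hb p ξ heq f hsym _ _ h01 hint_main,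
    fun hgt => s10.master_gt n a b c ha haeven hb p ξ hgt f hnonneg hsym hpos
      _ _ h01 hint_main hint_gt⟩
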